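/- Let P ⊂ ℝᵈ be finite with optimal clusters C₁*,…,C_k* (with means oⱼ*) forming P_opt ⊆ P, |P_opt| = n − z. Suppose: (a) Σⱼ Σ_{q ∈ S∩Cⱼ*}‖q − oⱼ*‖² ≤ (1+δ)(|S|/n)(n−z)(Δ + ξL²) where Δ = Δ₂^{−z}(P, O*); (b) Cost(S̃_opt, H) ≤ (2+2c)·Cost(S_opt, O*); (c) Cost(P̃_opt, H) ≤ (1/(1−δ))·(n/|S|)·Cost(S̃_opt, H). Then Δ₂^{−z}(P, H) ≤ (2 + (4+4c)·(1+δ)/(1−δ))·Δ + (4+4c)·((1+δ)/(1−δ))·ξL². -/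

import Mathlib

open Finset Metric

/-- deterministic assembly step of Theorem 10: from the sample
cost bound (a), the black-box approximation bound (b), the size-concentration
bound (c), together with `(n−z)Δ₂^{−z}(P,H) ≤ Cost(P_opt,H)` (d), the squared
triangle relaxation (e), and `Cost(P_opt,O*) = (n−z)Δ` (f), conclude
`Δ₂^{−z}(P,H) ≤ (2 + (4+4c)(1+δ)/(1−δ))Δ + (4+4c)((1+δ)/(1−δ))ξL²`. -/
theorem stmt_14 {d : ℕ} [DecidableEq (EuclideanSpace ℝ (Fin d))] (k n z : ℕ)
    (C : Fin k → Finset (EuclideanSpace ℝ (Fin d)))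
    (o : Fin k → EuclideanSpace ℝ (Fin d))
    (S H : Finset (EuclideanSpace ℝ (Fin d))) (hH : H.Nonempty)
    (c δ ξ L Δ ΔPH : ℝ)
    (hc : 1 ≤ c) (hδ : δ ∈ Set.Ioo (0 : ℝ) 1) (hξ : ξ ∈ Set.Ioo (0 : ℝ) 1)
    (hL : 0 ≤ L) (hΔ : 0 ≤ Δ)
    (hz : z < n) (hScard : 0 < S.card)
    (ha : ∑ j, ∑ q ∈ S ∩ C j, (dist q (o j)) ^ 2 ≤
      (1 + δ) * ((S.card : ℝ) / n) * ((n : ℝ) - z) * (Δ + ξ * L ^ 2))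
    (hb : ∑ j, ((S ∩ C j).card : ℝ) *
          (Metric.infDist (o j) (H : Set (EuclideanSpace ℝ (Fin d)))) ^ 2 ≤
        (2 + 2 * c) * ∑ j, ∑ q ∈ S ∩ C j, (dist q (o j)) ^ 2)
    (hc' : ∑ j, ((C j).card : ℝ) *
          (Metric.infDist (o j) (H : Set (EuclideanSpace ℝ (Fin d)))) ^ 2 ≤
        (1 / (1 - δ)) * ((n : ℝ) / S.card) *
          ∑ j, ((S ∩ C j).card : ℝ) *
            (Metric.infDist (o j) (H : Set (EuclideanSpace ℝ (Fin d)))) ^ 2)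
    (hd : ((n : ℝ) - z) * ΔPH ≤
        ∑ j, ∑ p ∈ C j, (Metric.infDist p (H : Set (EuclideanSpace ℝ (Fin d)))) ^ 2)
    (he : ∑ j, ∑ p ∈ C j, (Metric.infDist p (H : Set (EuclideanSpace ℝ (Fin d)))) ^ 2 ≤
        2 * ∑ j, ∑ p ∈ C j, (dist p (o j)) ^ 2 +
          2 * ∑ j, ((C j).card : ℝ) *
            (Metric.infDist (o j) (H : Set (EuclideanSpace ℝ (Fin d)))) ^ 2)
    (hf : ∑ j, ∑ p ∈ C j, (dist p (o j)) ^ 2 = ((n : ℝ) - z) * Δ) :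
    ΔPH ≤ (2 + (4 + 4 * c) * ((1 + δ) / (1 - δ))) * Δ +
      (4 + 4 * c) * ((1 + δ) / (1 - δ)) * ξ * L ^ 2 := by
  have hs : (0:ℝ) < S.card := by exact_mod_cast hScard
  have hn : (0:ℝ) < n := by
    have : 0 < n := Nat.pos_of_ne_zero (by omega)
    exact_mod_cast this
  have hnz : (0:ℝ) < (n:ℝ) - z := by
    have : (z:ℝ) < n := by exact_mod_cast hz
    linarith
  have h1δ : (0:ℝ) < 1 - δ := by linarith [hδ.2]
  have hKnn : (0:ℝ) ≤ (1 / (1 - δ)) * ((n : ℝ) / S.card) := by positivity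
  have hB2 : ∑ j, ((C j).card : ℝ) *
      (Metric.infDist (o j) (H : Set (EuclideanSpace ℝ (Fin d)))) ^ 2 ≤
      (1 / (1 - δ)) * ((n : ℝ) / S.card) * ((2 + 2 * c) *
        ((1 + δ) * ((S.card : ℝ) / n) * ((n : ℝ) - z) * (Δ + ξ * L ^ 2))) := by
    refine hc'.trans (mul_le_mul_of_nonneg_left (hb.trans ?_) hKnn)
    have h2c : (0:ℝ) ≤ 2 + 2 * c := by linarith
    exact mul_le_mul_of_nonneg_left ha h2c
  have hsimp : (1 / (1 - δ)) * ((n : ℝ) / S.card) * ((2 + 2 * c) *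
        ((1 + δ) * ((S.card : ℝ) / n) * ((n : ℝ) - z) * (Δ + ξ * L ^ 2)))
      = (2 + 2 * c) * ((1 + δ) / (1 - δ)) * ((n : ℝ) - z) * (Δ + ξ * L ^ 2) := by
    field_simp
  rw [hsimp] at hB2
  have key : ((n:ℝ) - z) * ΔPH ≤ ((n:ℝ) - z) *
      ((2 + (4 + 4 * c) * ((1 + δ) / (1 - δ))) * Δ +
        (4 + 4 * c) * ((1 + δ) / (1 - δ)) * ξ * L ^ 2) := by
    calc ((n:ℝ) - z) * ΔPH ≤ _ := hd
      _ ≤ 2 * (((n : ℝ) - z) * Δ) +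
          2 * ((2 + 2 * c) * ((1 + δ) / (1 - δ)) * ((n : ℝ) - z) * (Δ + ξ * L ^ 2)) := by
        rw [← hf]; linarith
      _ = _ := by ring
  exact le_of_mul_le_mul_left (by linarith [key]) hnz
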